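/- For all real x with 0 < x < π, the series ∑_{n=1}^∞ (1/n) sin(nx) cos^n(x) converges to π/2 − x. -/

import Mathlib

open Real

theorem stmt_0 (x : ℝ) (hx0 : 0 < x) (hxπ : x < π) :
    HasSum (fun n : ℕ => (1 / (n + 1 : ℝ)) * Real.sin ((n + 1 : ℝ) * x) * Real.cos x ^ (n + 1))
      (π / 2 - x) := by
  set z : ℂ := (Real.cos x : ℂ) * Complex.exp (x * Complex.I) with hz
  have hsin : 0 < Real.sin x := Real.sin_pos_of_pos_of_lt_pi hx0 hxπ
  have hpyth := Real.sin_sq_add_cos_sq x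
  have hnorm : ‖z‖ < 1 := by
    have h1 : ‖z‖ = |Real.cos x| := by
      rw [hz, norm_mul, Complex.norm_exp_ofReal_mul_I, mul_one,
        Complex.norm_real, Real.norm_eq_abs]
    rw [h1, abs_lt]
    constructor <;> nlinarith
  have H := Complex.hasSum_taylorSeries_neg_log hnorm
  -- shift index
  have H1 : HasSum (fun n : ℕ => z ^ (n + 1) / (n + 1)) (-Complex.log (1 - z)) := by
    have h0 := (hasSum_nat_add_iff' (f := fun n : ℕ => z ^ n / (n : ℂ)) 1).mpr H
    simpa using h0
  -- compute 1 - z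
  have hkey : 1 - z = (Real.sin x : ℂ) * (Complex.cos (x - π/2) + Complex.sin (x - π/2) * Complex.I) := by
    rw [hz, Complex.exp_mul_I]
    have c1 : Complex.cos ((x : ℂ) - π/2) = Complex.sin x := by
      rw [Complex.cos_sub, Complex.cos_pi_div_two, Complex.sin_pi_div_two]; ring
    have c2 : Complex.sin ((x : ℂ) - π/2) = -Complex.cos x := by
      rw [Complex.sin_sub, Complex.cos_pi_div_two, Complex.sin_pi_div_two]; ring
    push_cast
    rw [c1, c2]
    linear_combination -Complex.sin_sq_add_cos_sq (x : ℂ)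
  have harg : Complex.arg (1 - z) = x - π/2 := by
    rw [hkey]
    have hθ : x - π/2 ∈ Set.Ioc (-π) π := by
      constructor <;> [linarith [Real.pi_pos]; linarith [Real.pi_pos]]
    rw [show ((x : ℂ) - ↑π/2) = ((x - π/2 : ℝ) : ℂ) by push_cast; ring]
    rw [Complex.arg_real_mul _ hsin]
    exact Complex.arg_cos_add_sin_mul_I hθ
  have H2 := Complex.hasSum_im H1
  have him : (-Complex.log (1 - z)).im = π / 2 - x := by
    rw [Complex.neg_im, Complex.log_im, harg]; ring
  rw [him] at H2
  convert H2 using 2 with n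
  have hzn : z ^ (n + 1) = ((Real.cos x ^ (n + 1) : ℝ) : ℂ) *
      (((Real.cos ((n + 1 : ℝ) * x) : ℝ) : ℂ) + ((Real.sin ((n + 1 : ℝ) * x) : ℝ) : ℂ) * Complex.I) := by
    rw [hz, mul_pow, ← Complex.exp_nat_mul]
    have : (↑(n + 1) : ℂ) * (↑x * Complex.I) = (((n + 1 : ℝ) * x : ℝ) : ℂ) * Complex.I := by
      push_cast; ring
    rw [this, Complex.exp_mul_I, ← Complex.ofReal_cos, ← Complex.ofReal_sin]
    push_cast; ring
  rw [hzn]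
  have hn1 : ((n : ℂ) + 1) = (((n : ℝ) + 1 : ℝ) : ℂ) := by push_cast; ring
  rw [hn1, Complex.div_ofReal_im, Complex.im_ofReal_mul]
  simp only [Complex.add_im, Complex.ofReal_im, Complex.mul_im, Complex.ofReal_re,
    Complex.I_im, Complex.I_re, mul_one, mul_zero, zero_add, add_zero]
  ring
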